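/- Let H : (ℝ → ℝ) → (ℝ → ℝ) map measurable functions to measurable functions, be causal, and be finite-gain stable with gain h ≥ 0. Then for every measurable, locally square-integrable u : ℝ → ℝ supported on [0,∞), limsup_{T→∞} (1/T)∫₀ᵀ ((H u)(t))² dt ≤ h² · limsup_{T→∞} (1/T)∫₀ᵀ u(t)² dt (in [0,∞]). In particular, if u is a power signal then H u is a power signal and ‖H u‖_P ≤ h‖u‖_P, i.e. the power gain of H is at most its L² gain. -/

import Mathlib

open MeasureTheory Filter
open scoped ENNReal

/-- Power of a signal: `limsup_{T→∞} (1/T) ∫₀ᵀ u(t)² dt`, in `[0, ∞]`. -/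
noncomputable def powerSq (u : ℝ → ℝ) : ℝ≥0∞ :=
  Filter.limsup (fun T : ℝ => ENNReal.ofReal ((1 / T) * ∫ t in Set.Ioc (0 : ℝ) T, (u t) ^ 2))
    Filter.atTop

/-- The truncation `u_T`: equal to `u` on `[0, T]` and `0` elsewhere. -/
noncomputable def trunc (u : ℝ → ℝ) (T : ℝ) : ℝ → ℝ := fun t => if 0 ≤ t ∧ t ≤ T then u t else 0

/-- `H` is causal: for every input `u` and every `T > 0`, `(H u)(t) = (H u_T)(t)` for
almost every `t ∈ [0, T]`. -/
def Causal (H : (ℝ → ℝ) → ℝ → ℝ) : Prop :=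
  ∀ u : ℝ → ℝ, ∀ T : ℝ, 0 < T →
    ∀ᵐ t ∂(volume.restrict (Set.Icc (0 : ℝ) T)), H u t = H (trunc u T) t

/-- Membership of `L²([0,∞))`. -/
def MemL2pos (u : ℝ → ℝ) : Prop := MemLp u 2 (volume.restrict (Set.Ici (0 : ℝ)))

/-- `H` is finite-gain stable with gain `h`: it maps `L²([0,∞))` into itself and
`‖H u‖_{L²} ≤ h ‖u‖_{L²}` for all `u ∈ L²([0,∞))`. -/
def FGS (H : (ℝ → ℝ) → ℝ → ℝ) (h : ℝ) : Prop :=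
  ∀ u : ℝ → ℝ, MemL2pos u → MemL2pos (H u) ∧
    eLpNorm (H u) 2 (volume.restrict (Set.Ici (0 : ℝ))) ≤
      ENNReal.ofReal h * eLpNorm u 2 (volume.restrict (Set.Ici (0 : ℝ)))

/-- A causal finite-gain-stable operator with gain `h` has power gain at most `h`:
for any measurable, locally square-integrable `u` supported on `[0, ∞)`,
`limsup_{T→∞} (1/T)∫₀ᵀ (H u)² ≤ h² limsup_{T→∞} (1/T)∫₀ᵀ u²` in `[0, ∞]`. -/
lemma lintegral_sq_eq_eLpNorm_sq (f : ℝ → ℝ) (μ : Measure ℝ) :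
    ∫⁻ x, ENNReal.ofReal (f x ^ 2) ∂μ = (eLpNorm f 2 μ) ^ 2 := by
  rw [eLpNorm_eq_lintegral_rpow_enorm_toReal two_ne_zero ENNReal.ofNat_ne_top]
  have h1 : ∀ x, ‖f x‖ₑ ^ ((2:ℝ≥0∞).toReal) = ENNReal.ofReal (f x ^ 2) := by
    intro x
    rw [show ((2:ℝ≥0∞).toReal) = (2:ℝ) by simp, ← ofReal_norm_eq_enorm,
      ENNReal.ofReal_rpow_of_nonneg (norm_nonneg _) (by norm_num)]
    congr 1
    rw [show (2:ℝ) = ((2:ℕ):ℝ) by norm_num, Real.rpow_natCast, Real.norm_eq_abs, sq_abs]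
  simp_rw [h1]
  rw [← ENNReal.rpow_natCast _ 2, ← ENNReal.rpow_mul]
  norm_num

set_option maxHeartbeats 1000000 in
theorem power_gain_le_L2_gain (H : (ℝ → ℝ) → ℝ → ℝ)
    (hmeas : ∀ u : ℝ → ℝ, Measurable u → Measurable (H u))
    (hcausal : Causal H) (h : ℝ) (hh : 0 ≤ h) (hfgs : FGS H h)
    (u : ℝ → ℝ) (hu : Measurable u) (husupp : ∀ t : ℝ, t < 0 → u t = 0)
    (huloc : ∀ T : ℝ, 0 < T → IntegrableOn (fun t => (u t) ^ 2) (Set.Ioc 0 T)) :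
    powerSq (H u) ≤ ENNReal.ofReal (h ^ 2) * powerSq u := by
  set μ0 := volume.restrict (Set.Ici (0 : ℝ)) with hμ0
  have key : ∀ T : ℝ, 0 < T →
      ENNReal.ofReal ((1 / T) * ∫ t in Set.Ioc (0:ℝ) T, (H u t) ^ 2) ≤
      ENNReal.ofReal (h ^ 2) *
        ENNReal.ofReal ((1 / T) * ∫ t in Set.Ioc (0:ℝ) T, (u t) ^ 2) := by
    intro T hT
    set uT := trunc u T with huT
    have huT_ind : uT = Set.indicator (Set.Icc (0:ℝ) T) u := by
      funext t
      simp [huT, trunc, Set.indicator, Set.mem_Icc]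
    have hIccIoc : volume.restrict (Set.Icc (0:ℝ) T) = volume.restrict (Set.Ioc (0:ℝ) T) :=
      (Measure.restrict_congr_set Ioc_ae_eq_Icc).symm
    have hrr : μ0.restrict (Set.Icc (0:ℝ) T) = volume.restrict (Set.Icc (0:ℝ) T) := by
      rw [hμ0, Measure.restrict_restrict measurableSet_Icc,
        Set.inter_eq_left.2 (fun x hx => hx.1)]
    -- uT ∈ L²([0,∞))
    have huTmem : MemL2pos uT := by
      rw [MemL2pos, huT_ind, memLp_indicator_iff_restrict measurableSet_Icc, ← hμ0, hrr]
      rw [memLp_two_iff_integrable_sq hu.aestronglyMeasurable]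
      rw [show volume.restrict (Set.Icc (0:ℝ) T) = volume.restrict (Set.Ioc (0:ℝ) T) from hIccIoc]
      exact huloc T hT
    obtain ⟨hHuTmem, hbound⟩ := hfgs uT huTmem
    -- the chain of lintegral inequalities
    have step1 : ∫⁻ t in Set.Ioc (0:ℝ) T, ENNReal.ofReal ((H u t) ^ 2) =
        ∫⁻ t in Set.Ioc (0:ℝ) T, ENNReal.ofReal ((H uT t) ^ 2) := by
      refine lintegral_congr_ae ?_
      have hc := hcausal u T hT
      rw [hIccIoc] at hc
      filter_upwards [hc] with t ht
      rw [ht]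
    have step2 : ∫⁻ t in Set.Ioc (0:ℝ) T, ENNReal.ofReal ((H uT t) ^ 2) ≤
        ∫⁻ t, ENNReal.ofReal ((H uT t) ^ 2) ∂μ0 := by
      rw [hμ0]
      exact lintegral_mono_set (fun x hx => le_of_lt hx.1)
    have step3 : ∫⁻ t, ENNReal.ofReal ((H uT t) ^ 2) ∂μ0 ≤
        ENNReal.ofReal (h ^ 2) * ∫⁻ t, ENNReal.ofReal ((uT t) ^ 2) ∂μ0 := by
      rw [lintegral_sq_eq_eLpNorm_sq, lintegral_sq_eq_eLpNorm_sq]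
      calc eLpNorm (H uT) 2 μ0 ^ 2 ≤ (ENNReal.ofReal h * eLpNorm uT 2 μ0) ^ 2 :=
            pow_le_pow_left₀ (zero_le) hbound 2
        _ = ENNReal.ofReal (h ^ 2) * eLpNorm uT 2 μ0 ^ 2 := by
            rw [mul_pow, ← ENNReal.ofReal_pow hh]
    have step4 : ∫⁻ t, ENNReal.ofReal ((uT t) ^ 2) ∂μ0 =
        ∫⁻ t in Set.Ioc (0:ℝ) T, ENNReal.ofReal ((u t) ^ 2) := by
      have : ∀ t, ENNReal.ofReal ((uT t) ^ 2) =
          Set.indicator (Set.Icc (0:ℝ) T) (fun t => ENNReal.ofReal ((u t) ^ 2)) t := by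
        intro t
        by_cases ht : t ∈ Set.Icc (0:ℝ) T
        · simp [huT, trunc, Set.mem_Icc.1 ht, Set.indicator_of_mem ht]
        · have : ¬ (0 ≤ t ∧ t ≤ T) := by simpa [Set.mem_Icc] using ht
          simp [huT, trunc, this, Set.indicator_of_notMem ht]
      simp_rw [this]
      rw [lintegral_indicator measurableSet_Icc, hrr, hIccIoc]
    have step5 : ∫⁻ t in Set.Ioc (0:ℝ) T, ENNReal.ofReal ((u t) ^ 2) =
        ENNReal.ofReal (∫ t in Set.Ioc (0:ℝ) T, (u t) ^ 2) :=
      (ofReal_integral_eq_lintegral_ofReal (huloc T hT)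
        (Filter.Eventually.of_forall fun t => sq_nonneg _)).symm
    -- now bound the LHS
    have hT' : (0:ℝ) ≤ 1 / T := by positivity
    have lhs_le : ENNReal.ofReal ((1 / T) * ∫ t in Set.Ioc (0:ℝ) T, (H u t) ^ 2) ≤
        ENNReal.ofReal (1 / T) * ∫⁻ t in Set.Ioc (0:ℝ) T, ENNReal.ofReal ((H u t) ^ 2) := by
      by_cases hint : IntegrableOn (fun t => (H u t) ^ 2) (Set.Ioc (0:ℝ) T)
      · rw [ENNReal.ofReal_mul hT',
          ofReal_integral_eq_lintegral_ofReal hint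
            (Filter.Eventually.of_forall fun t => sq_nonneg _)]
      · rw [integral_undef hint]
        simp
    calc ENNReal.ofReal ((1 / T) * ∫ t in Set.Ioc (0:ℝ) T, (H u t) ^ 2)
        ≤ ENNReal.ofReal (1 / T) * ∫⁻ t in Set.Ioc (0:ℝ) T, ENNReal.ofReal ((H u t) ^ 2) :=
          lhs_le
      _ ≤ ENNReal.ofReal (1 / T) *
            (ENNReal.ofReal (h ^ 2) * ∫⁻ t in Set.Ioc (0:ℝ) T, ENNReal.ofReal ((u t) ^ 2)) := by
          gcongr
          rw [step1]
          calc _ ≤ _ := step2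
            _ ≤ _ := step3
            _ = _ := by rw [step4]
      _ = ENNReal.ofReal (h ^ 2) *
            ENNReal.ofReal ((1 / T) * ∫ t in Set.Ioc (0:ℝ) T, (u t) ^ 2) := by
          rw [step5, ENNReal.ofReal_mul hT']
          ring
  -- conclude via limsup
  have hle : (fun T : ℝ => ENNReal.ofReal ((1 / T) * ∫ t in Set.Ioc (0:ℝ) T, (H u t) ^ 2))
      ≤ᶠ[atTop] fun T : ℝ => ENNReal.ofReal (h ^ 2) *
        ENNReal.ofReal ((1 / T) * ∫ t in Set.Ioc (0:ℝ) T, (u t) ^ 2) := by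
    filter_upwards [eventually_gt_atTop (0:ℝ)] with T hT
    exact key T hT
  calc powerSq (H u) ≤ Filter.limsup (fun T : ℝ => ENNReal.ofReal (h ^ 2) *
        ENNReal.ofReal ((1 / T) * ∫ t in Set.Ioc (0:ℝ) T, (u t) ^ 2)) atTop :=
        limsup_le_limsup hle
    _ = ENNReal.ofReal (h ^ 2) * powerSq u :=
        ENNReal.limsup_const_mul_of_ne_top ENNReal.ofReal_ne_top
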